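/- Let X ⊆ ℝ⁴ be a convex polytope with nonempty interior. Then for every y ∈ frontier X, the Reeb cone at y has dimension at least 1: there exists w ≠ 0 with w ∈ T_y⁺X and −i·w ∈ N_y⁺X (equivalently, w ∈ T_y⁺X ∩ i·N_y⁺X). (Lemma 3.4 of the paper.) -/

import Mathlib

open RealInnerProductSpace

/-- The standard complex structure on ℝ⁴ = {(x₁,x₂,y₁,y₂)}:
`i(x₁,x₂,y₁,y₂) = (−y₁,−y₂,x₁,x₂)`. -/
def Imap (v : EuclideanSpace ℝ (Fin 4)) : EuclideanSpace ℝ (Fin 4) :=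
  WithLp.toLp 2 ![-(v 2), -(v 3), v 0, v 1]

/-- The tangent cone `T_y⁺X`. -/
def tangentConePlus {m : ℕ} (X : Set (EuclideanSpace ℝ (Fin m)))
    (y : EuclideanSpace ℝ (Fin m)) : Set (EuclideanSpace ℝ (Fin m)) :=
  closure {v | ∃ ε : ℝ, 0 < ε ∧ y + ε • v ∈ X}

/-- The positive normal cone `N_y⁺X`. -/
def normalConePlus {m : ℕ} (X : Set (EuclideanSpace ℝ (Fin m)))
    (y : EuclideanSpace ℝ (Fin m)) : Set (EuclideanSpace ℝ (Fin m)) :=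
  {v | ∀ x ∈ X, ⟪x - y, v⟫ ≤ 0}

lemma Imap_antisymm (a b : EuclideanSpace ℝ (Fin 4)) : ⟪Imap a, b⟫ = -⟪Imap b, a⟫ := by
  simp [Imap, PiLp.inner_apply, RCLike.inner_apply, Fin.sum_univ_four]
  ring

lemma Imap_Imap (v : EuclideanSpace ℝ (Fin 4)) : Imap (Imap v) = -v := by
  ext i
  fin_cases i <;> simp [Imap]

lemma Imap_ne_zero {v : EuclideanSpace ℝ (Fin 4)} (hv : v ≠ 0) : Imap v ≠ 0 := by
  intro h
  apply hv
  have h2 := congrArg Imap h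
  rw [Imap_Imap] at h2
  have h3 : Imap (0 : EuclideanSpace ℝ (Fin 4)) = 0 := by
    ext i; fin_cases i <;> simp [Imap]
  rw [h3] at h2
  simpa using (neg_eq_zero.mp h2)

lemma sum_sum_antisymm {α : Type*} [Fintype α] (B : α → α → ℝ)
    (hB : ∀ j k, B j k = - B k j) (t : α → ℝ) :
    ∑ j, ∑ k, t j * t k * B j k = 0 := by
  have h : (∑ j, ∑ k, t j * t k * B j k) = - ∑ j, ∑ k, t j * t k * B j k := by
    calc (∑ j, ∑ k, t j * t k * B j k)
        = ∑ j, ∑ k, -(t k * t j * B k j) := by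
          refine Finset.sum_congr rfl fun j _ => Finset.sum_congr rfl fun k _ => ?_
          rw [hB j k]; ring
      _ = -∑ j, ∑ k, (t k * t j * B k j) := by simp
      _ = -∑ k, ∑ j, (t k * t j * B k j) := by rw [Finset.sum_comm]
  linarith

lemma game_lemma {α : Type*} [Fintype α] [Nonempty α] (B : α → α → ℝ)
    (hB : ∀ j k, B j k = - B k j) :
    ∃ t : α → ℝ, (∀ k, 0 ≤ t k) ∧ (∑ k, t k = 1) ∧ ∀ j, ∑ k, t k * B j k ≤ 0 := by
  classical
  by_contra hcon
  push_neg at hcon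
  set φ : (α → ℝ) →ₗ[ℝ] (α → ℝ) :=
    { toFun := fun t j => ∑ k, t k * B j k
      map_add' := fun a b => by
        funext j; simp [add_mul, Finset.sum_add_distrib]
      map_smul' := fun r a => by
        funext j; simp [Finset.mul_sum, mul_assoc] } with hφ
  set S : Set (α → ℝ) := φ '' stdSimplex ℝ α with hS
  set T : Set (α → ℝ) := {q | ∀ j, q j ≤ 0} with hT
  have hSc : IsCompact S := (isCompact_stdSimplex ℝ α).image φ.continuous_of_finiteDimensional
  have hSconv : Convex ℝ S := (convex_stdSimplex ℝ α).linear_image φ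
  have hTconv : Convex ℝ T := by
    intro q hq r hr a b ha hb hab j
    have h1 := hq j; have h2 := hr j
    have : a * q j + b * r j ≤ 0 := by nlinarith
    simpa using this
  have hTclosed : IsClosed T := by
    have : T = ⋂ j, {q : α → ℝ | q j ≤ 0} := by
      ext q; simp [hT, Set.mem_iInter]
    rw [this]
    exact isClosed_iInter fun j => isClosed_le (continuous_apply j) continuous_const
  have hdisj : Disjoint S T := by
    rw [Set.disjoint_left]
    rintro q ⟨t, ht, rfl⟩ hqT
    obtain ⟨j, hj⟩ := hcon t ht.1 ht.2
    exact absurd (hqT j) (not_le.mpr hj)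
  obtain ⟨f, u, v, hfS, huv, hfT⟩ :=
    geometric_hahn_banach_compact_closed hSconv hSc hTconv hTclosed hdisj
  have h0T : (0 : α → ℝ) ∈ T := fun j => le_refl 0
  have hv0 : v < 0 := by have := hfT 0 h0T; simpa using this
  set p : α → ℝ := fun j => f (Pi.single j 1 : α → ℝ) with hp
  have hpnonpos : ∀ j, p j ≤ 0 := by
    intro j
    by_contra hpj
    push_neg at hpj
    set b : α → ℝ := ((v - 1) / p j) • (Pi.single j 1 : α → ℝ) with hb
    have hdiv : (v - 1) / p j ≤ 0 :=
      div_nonpos_of_nonpos_of_nonneg (by linarith) (le_of_lt hpj)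
    have hbT : b ∈ T := by
      intro k
      rw [hb]
      by_cases hk : k = j
      · subst hk; simp [Pi.single_apply]; exact hdiv
      · simp [Pi.single_apply, hk]
    have hfb : f b = v - 1 := by
      rw [hb, map_smul]
      have hpj' : p j ≠ 0 := ne_of_gt hpj
      field_simp [hp]
      show ((v - 1) / p j) * p j = v - 1
      exact div_mul_cancel₀ (v - 1) hpj'
    have := hfT b hbT
    rw [hfb] at this
    linarith
  have hfq : ∀ q : α → ℝ, f q = ∑ j, q j * p j := by
    intro q
    have hq : q = ∑ j, q j • (Pi.single j 1 : α → ℝ) := by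
      funext k
      simp [Finset.sum_apply, Pi.single_apply]
    conv_lhs => rw [hq]
    rw [map_sum]
    simp [hp, smul_eq_mul]
  set s : α → ℝ := fun j => - p j with hs
  have hsnonneg : ∀ j, 0 ≤ s j := fun j => by simp [hs]; exact hpnonpos j
  set σ : ℝ := ∑ j, s j with hσ
  have hσnonneg : 0 ≤ σ := Finset.sum_nonneg fun j _ => hsnonneg j
  have hσpos : 0 < σ := by
    rcases lt_or_eq_of_le hσnonneg with h | h
    · exact h
    exfalso
    have hall : ∀ j ∈ Finset.univ, s j = 0 :=
      (Finset.sum_eq_zero_iff_of_nonneg (fun j _ => hsnonneg j)).mp h.symm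
    have hpz : ∀ j, p j = 0 := fun j => by
      have := hall j (Finset.mem_univ j); simp [hs] at this; linarith
    set t0 : α → ℝ := fun _ => (Fintype.card α : ℝ)⁻¹ with ht0
    have hcard : (0:ℝ) < (Fintype.card α : ℝ) := by
      have := Fintype.card_pos (α := α); positivity
    have ht0mem : t0 ∈ stdSimplex ℝ α := by
      refine ⟨fun k => ?_, ?_⟩
      · positivity
      · rw [ht0]; simp [Finset.sum_const, Finset.card_univ]
    have := hfS (φ t0) ⟨t0, ht0mem, rfl⟩
    rw [hfq] at this
    simp [hpz] at this
    linarith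
  set t : α → ℝ := fun k => s k / σ with htdef
  have htmem : t ∈ stdSimplex ℝ α := by
    refine ⟨fun k => div_nonneg (hsnonneg k) (le_of_lt hσpos), ?_⟩
    rw [htdef]
    simp only
    rw [← Finset.sum_div, ← hσ]
    field_simp
  have hfa := hfS (φ t) ⟨t, htmem, rfl⟩
  have hpt : ∀ j, p j = -(σ * t j) := by
    intro j
    have h1 : σ * t j = s j := by
      rw [htdef]; field_simp
    rw [h1, hs]; simp
  have hfval : f (φ t) = -σ * (∑ j, ∑ k, t j * t k * B j k) := by
    rw [hfq, Finset.mul_sum]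
    refine Finset.sum_congr rfl fun j _ => ?_
    have hφtj : (φ t) j = ∑ k, t k * B j k := rfl
    rw [hφtj, hpt j, Finset.sum_mul, Finset.mul_sum]
    exact Finset.sum_congr rfl fun k _ => by ring
  rw [sum_sum_antisymm B hB t, mul_zero] at hfval
  rw [hfval] at hfa
  linarith

/-- Lemma 3.4: if `X ⊆ ℝ⁴` is a convex polytope with nonempty interior, then for every
boundary point `y` the Reeb cone `R_y⁺X = T_y⁺X ∩ i·N_y⁺X` contains a nonzero vector,
i.e. there is `w ≠ 0` with `w ∈ T_y⁺X` and `−i·w ∈ N_y⁺X`. -/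
theorem reebCone_nontrivial {N : ℕ}
    (n : Fin N → EuclideanSpace ℝ (Fin 4)) (c : Fin N → ℝ)
    (hn : ∀ i, n i ≠ 0)
    (X : Set (EuclideanSpace ℝ (Fin 4)))
    (hX : X = ⋂ i, {x | ⟪x, n i⟫ ≤ c i})
    (hcomp : IsCompact X)
    (hint : (interior X).Nonempty) :
    ∀ y ∈ frontier X, ∃ w : EuclideanSpace ℝ (Fin 4),
      w ≠ 0 ∧ w ∈ tangentConePlus X y ∧ -(Imap w) ∈ normalConePlus X y := by
  classical
  intro y hy
  have hXc : IsClosed X := by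
    rw [hX]
    exact isClosed_iInter fun i =>
      isClosed_le (Continuous.inner continuous_id continuous_const) continuous_const
  have hyX : y ∈ X := by
    have := hy.1
    rwa [hXc.closure_eq] at this
  have hyI : y ∉ interior X := hy.2
  have hyle : ∀ i, ⟪y, n i⟫ ≤ c i := by
    intro i
    rw [hX] at hyX
    exact Set.mem_iInter.mp hyX i
  -- there is an active constraint
  have hactive : ∃ i, ⟪y, n i⟫ = c i := by
    by_contra h
    push_neg at h
    have hlt : ∀ i, ⟪y, n i⟫ < c i := fun i => (hyle i).lt_of_ne (h i)
    apply hyI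
    have hVopen : IsOpen (⋂ i, {x : EuclideanSpace ℝ (Fin 4) | ⟪x, n i⟫ < c i}) :=
      isOpen_iInter_of_finite fun i =>
        isOpen_lt (Continuous.inner continuous_id continuous_const) continuous_const
    have hVsub : (⋂ i, {x : EuclideanSpace ℝ (Fin 4) | ⟪x, n i⟫ < c i}) ⊆ X := by
      rw [hX]
      refine Set.iInter_mono fun i => ?_
      intro x hx
      have hx' : ⟪x, n i⟫ < c i := hx
      exact le_of_lt hx'
    exact interior_maximal hVsub hVopen (Set.mem_iInter.mpr hlt)
  -- the active index type
  obtain ⟨i₀, hi₀⟩ := hactive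
  haveI : Nonempty {i : Fin N // ⟪y, n i⟫ = c i} := ⟨⟨i₀, hi₀⟩⟩
  set J := {i : Fin N // ⟪y, n i⟫ = c i}
  -- the antisymmetric payoff matrix
  set B : J → J → ℝ := fun j k => ⟪Imap (n k.1), n j.1⟫ with hBdef
  have hB : ∀ j k, B j k = - B k j := fun j k => Imap_antisymm (n k.1) (n j.1)
  obtain ⟨t, ht0, ht1, htB⟩ := game_lemma B hB
  set ν : EuclideanSpace ℝ (Fin 4) := ∑ k : J, t k • n k.1 with hν
  have hinner : ∀ x : EuclideanSpace ℝ (Fin 4), ⟪x, ν⟫ = ∑ k : J, t k * ⟪x, n k.1⟫ := by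
    intro x
    rw [hν, inner_sum]
    exact Finset.sum_congr rfl fun k _ => real_inner_smul_right x (n k.1) (t k)
  -- key tangency inequality
  have hkey : ∀ j : J, ⟪Imap ν, n j.1⟫ ≤ 0 := by
    intro j
    have : ⟪Imap ν, n j.1⟫ = ∑ k : J, t k * B j k := by
      rw [Imap_antisymm, hinner (Imap (n j.1)), ← Finset.sum_neg_distrib]
      refine Finset.sum_congr rfl fun k _ => ?_
      rw [hBdef]
      simp only
      rw [Imap_antisymm (n k.1) (n j.1)]
      ring
    rw [this]
    exact htB j
  -- interior point
  obtain ⟨x₀, hx₀⟩ := hint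
  have hx₀X : x₀ ∈ X := interior_subset hx₀
  have hx₀le : ∀ i, ⟪x₀, n i⟫ ≤ c i := by
    intro i
    rw [hX] at hx₀X
    exact Set.mem_iInter.mp hx₀X i
  have hstrict : ∀ j : J, ⟪x₀, n j.1⟫ < c j.1 := by
    intro j
    rcases lt_or_eq_of_le (hx₀le j.1) with h | h
    · exact h
    exfalso
    obtain ⟨δ, hδ, hball⟩ := Metric.isOpen_iff.mp isOpen_interior x₀ hx₀
    have hnj : (0:ℝ) < ‖n j.1‖ := norm_pos_iff.mpr (hn j.1)
    set z : EuclideanSpace ℝ (Fin 4) := x₀ + (δ / (2 * ‖n j.1‖)) • n j.1 with hz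
    have hzball : z ∈ Metric.ball x₀ δ := by
      rw [Metric.mem_ball, hz]
      have : dist (x₀ + (δ / (2 * ‖n j.1‖)) • n j.1) x₀ = ‖(δ / (2 * ‖n j.1‖)) • n j.1‖ := by
        rw [dist_eq_norm]; congr 1; abel
      rw [this, norm_smul, Real.norm_eq_abs, abs_of_pos (by positivity)]
      have hhalf : δ / (2 * ‖n j.1‖) * ‖n j.1‖ = δ / 2 := by field_simp
      rw [hhalf]
      linarith
    have hzX : z ∈ X := interior_subset (hball hzball)
    have hzle : ⟪z, n j.1⟫ ≤ c j.1 := by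
      rw [hX] at hzX
      exact Set.mem_iInter.mp hzX j.1
    have hzinner : ⟪z, n j.1⟫ = c j.1 + (δ / (2 * ‖n j.1‖)) * ‖n j.1‖^2 := by
      rw [hz, inner_add_left, real_inner_smul_left, real_inner_self_eq_norm_sq, h]
    rw [hzinner] at hzle
    have hpos : 0 < (δ / (2 * ‖n j.1‖)) * ‖n j.1‖^2 := by positivity
    linarith
  -- ν is nonzero
  have hposk : ∃ k : J, 0 < t k := by
    by_contra h
    push_neg at h
    have : (∑ k : J, t k) ≤ 0 := Finset.sum_nonpos fun k _ => h k
    rw [ht1] at this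
    linarith
  have hνinner : ⟪x₀ - y, ν⟫ < 0 := by
    rw [hinner]
    obtain ⟨k₀, hk₀⟩ := hposk
    have hterm : ∀ k : J, ⟪x₀ - y, n k.1⟫ < 0 := by
      intro k
      rw [inner_sub_left]
      have := hstrict k
      have := k.2
      linarith
    have hle : ∀ k ∈ Finset.univ, t k * ⟪x₀ - y, n k.1⟫ ≤ (fun _ => (0:ℝ)) k :=
      fun k _ => mul_nonpos_of_nonneg_of_nonpos (ht0 k) (le_of_lt (hterm k))
    have hlt : ∃ k ∈ Finset.univ, t k * ⟪x₀ - y, n k.1⟫ < (fun _ => (0:ℝ)) k :=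
      ⟨k₀, Finset.mem_univ k₀, mul_neg_of_pos_of_neg hk₀ (hterm k₀)⟩
    calc ∑ k : J, t k * ⟪x₀ - y, n k.1⟫ < ∑ _k : J, (0:ℝ) := Finset.sum_lt_sum hle hlt
      _ = 0 := by simp
  have hνne : ν ≠ 0 := by
    intro h
    rw [h, inner_zero_right] at hνinner
    exact lt_irrefl 0 hνinner
  -- the Reeb vector
  refine ⟨Imap ν, Imap_ne_zero hνne, ?_, ?_⟩
  · -- tangent cone membership
    apply subset_closure
    -- find small ε > 0
    set U : Set (EuclideanSpace ℝ (Fin 4)) :=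
      ⋂ i, {x : EuclideanSpace ℝ (Fin 4) | ⟪y, n i⟫ = c i ∨ ⟪x, n i⟫ < c i} with hU
    have hUopen : IsOpen U := by
      refine isOpen_iInter_of_finite fun i => ?_
      by_cases h : ⟪y, n i⟫ = c i
      · have : {x : EuclideanSpace ℝ (Fin 4) | ⟪y, n i⟫ = c i ∨ ⟪x, n i⟫ < c i} = Set.univ := by
          ext x; simp [h]
        rw [this]; exact isOpen_univ
      · have : {x : EuclideanSpace ℝ (Fin 4) | ⟪y, n i⟫ = c i ∨ ⟪x, n i⟫ < c i}
            = {x : EuclideanSpace ℝ (Fin 4) | ⟪x, n i⟫ < c i} := by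
          ext x
          simp only [Set.mem_setOf_eq]
          exact or_iff_right h
        rw [this]
        exact isOpen_lt (Continuous.inner continuous_id continuous_const) continuous_const
    have hyU : y ∈ U := by
      rw [hU]
      refine Set.mem_iInter.mpr fun i => ?_
      by_cases h : ⟪y, n i⟫ = c i
      · exact Or.inl h
      · exact Or.inr ((hyle i).lt_of_ne h)
    have hcont : Continuous fun ε : ℝ => y + ε • (Imap ν) := by
      exact continuous_const.add (continuous_id.smul continuous_const)
    have hpre : IsOpen ((fun ε : ℝ => y + ε • (Imap ν)) ⁻¹' U) := hUopen.preimage hcont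
    have h0pre : (0:ℝ) ∈ (fun ε : ℝ => y + ε • (Imap ν)) ⁻¹' U := by
      simp [Set.mem_preimage]
      exact hyU
    obtain ⟨δ, hδ, hball⟩ := Metric.isOpen_iff.mp hpre 0 h0pre
    refine ⟨δ/2, by linarith, ?_⟩
    have hmem : (δ/2 : ℝ) ∈ Metric.ball (0:ℝ) δ := by
      rw [Metric.mem_ball, Real.dist_eq]
      rw [sub_zero, abs_of_pos (by linarith)]
      linarith
    have hU2 : y + (δ/2) • (Imap ν) ∈ U := hball hmem
    rw [hX]
    refine Set.mem_iInter.mpr fun i => ?_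
    by_cases h : ⟪y, n i⟫ = c i
    · -- active: use hkey
      show ⟪y + (δ/2) • Imap ν, n i⟫ ≤ c i
      rw [inner_add_left, real_inner_smul_left, h]
      have := hkey ⟨i, h⟩
      nlinarith
    · -- inactive: use U membership
      have := Set.mem_iInter.mp hU2 i
      rcases this with h' | h'
      · exact absurd h' h
      · exact le_of_lt h'
  · -- normal cone membership
    have hIw : -(Imap (Imap ν)) = ν := by rw [Imap_Imap]; simp
    rw [hIw]
    intro x hx
    rw [hinner]
    refine Finset.sum_nonpos fun k _ => ?_
    have hxk : ⟪x, n k.1⟫ ≤ c k.1 := by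
      rw [hX] at hx
      exact Set.mem_iInter.mp hx k.1
    have : ⟪x - y, n k.1⟫ ≤ 0 := by
      rw [inner_sub_left]
      have := k.2
      linarith
    exact mul_nonpos_of_nonneg_of_nonpos (ht0 k) this
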